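/- For every t > 0, the normed space (𝒲_t, ‖·‖_{𝒲_t}) is complete; equivalently, every sequence (k_m) in 𝒲_t with Σ_m ‖k_m‖_{𝒲_t} < ∞ has the property that Σ_m k_m converges pointwise to an element k of 𝒲_t with ‖k‖_{𝒲_t} ≤ Σ_m ‖k_m‖_{𝒲_t}. -/

import Mathlib

open MeasureTheory Complex Filter
open scoped ENNReal NNReal Topology

noncomputable section

/-- ℂⁿ, modeled as maps from `Fin n` to `ℂ`. -/
abbrev Cn (n : ℕ) := Fin n → ℂ

/-- The Euclidean norm `|z|` on ℂⁿ. -/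
def eNorm {n : ℕ} (z : Cn n) : ℝ := Real.sqrt (∑ i, ‖z i‖ ^ 2)

/-- The sesquilinear pairing `w·z̄` on ℂⁿ. -/
def herm {n : ℕ} (w z : Cn n) : ℂ := ∑ i, w i * (starRingEnd ℂ) (z i)

/-- The Gaussian measure `dμ_t(z) = (πt)^{-n} e^{-|z|²/t} dz` on ℂⁿ. -/
def gaussianMeasure (n : ℕ) (t : ℝ) : Measure (Cn n) :=
  volume.withDensity fun z => ENNReal.ofReal (((Real.pi * t) ^ n)⁻¹ * Real.exp (-eNorm z ^ 2 / t))

/-- The `F_t^p`-norm (equivalently, the `L_t^p`-norm): for `p < ∞` it is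
`((p/(2πt))^n ∫ |f(z)|^p e^{-p|z|²/(2t)} dz)^{1/p}`, and for `p = ∞` it is
`sup_z |f(z)| e^{-|z|²/(2t)}` (with values in `[0,∞]`). -/
def fockNormE (n : ℕ) (t : ℝ) (p : ℝ≥0∞) (f : Cn n → ℂ) : ℝ≥0∞ :=
  if p = ∞ then ⨆ z : Cn n, ENNReal.ofReal (‖f z‖ * Real.exp (-eNorm z ^ 2 / (2 * t)))
  else (ENNReal.ofReal ((p.toReal / (2 * Real.pi * t)) ^ n) *
      ∫⁻ z, ENNReal.ofReal ((‖f z‖ * Real.exp (-eNorm z ^ 2 / (2 * t))) ^ p.toReal)) ^ p.toReal⁻¹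

/-- Membership in the Fock space `F_t^p`: entire with finite Fock `p`-norm. -/
def MemFock (n : ℕ) (t : ℝ) (p : ℝ≥0∞) (f : Cn n → ℂ) : Prop :=
  Differentiable ℂ f ∧ fockNormE n t p f < ∞

/-- Membership in the Wiener class `𝒲_t`: measurable kernels that are holomorphic in the
second variable, anti-holomorphic in the first variable (i.e. the conjugate is holomorphic),
and dominated by `e^{(|z|²+|w|²)/(2t)} H(w-z)` for some nonnegative `H ∈ L¹(ℂⁿ)`. -/
def IsWienerKernel (n : ℕ) (t : ℝ) (k : Cn n → Cn n → ℂ) : Prop :=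
  Measurable (fun q : Cn n × Cn n => k q.1 q.2) ∧
  (∀ w : Cn n, Differentiable ℂ fun z => k w z) ∧
  (∀ z : Cn n, Differentiable ℂ fun w => (starRingEnd ℂ) (k w z)) ∧
  ∃ H : Cn n → ℝ, Integrable H ∧ (∀ x, 0 ≤ H x) ∧
    ∀ w z : Cn n, ‖k w z‖ ≤ Real.exp ((eNorm z ^ 2 + eNorm w ^ 2) / (2 * t)) * H (w - z)

/-- The Wiener norm `‖k‖_{𝒲_t} = (πt)^{-n} inf { ‖H‖_{L¹} : H a dominating function for k }`. -/
def wienerNorm (n : ℕ) (t : ℝ) (k : Cn n → Cn n → ℂ) : ℝ :=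
  ((Real.pi * t) ^ n)⁻¹ *
    sInf { c : ℝ | ∃ H : Cn n → ℝ, Integrable H ∧ (∀ x, 0 ≤ H x) ∧
      (∀ w z : Cn n, ‖k w z‖ ≤ Real.exp ((eNorm z ^ 2 + eNorm w ^ 2) / (2 * t)) * H (w - z)) ∧
      c = ∫ x, H x }

namespace WienerAux

variable {n : ℕ}

/-- `eNorm` as the Euclidean norm. -/
lemma eNorm_def (z : Cn n) :
    eNorm z = ‖(show EuclideanSpace ℂ (Fin n) from (WithLp.equiv 2 (Cn n)).symm z)‖ := by
  rw [EuclideanSpace.norm_eq]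
  rfl

lemma eNorm_nonneg (z : Cn n) : 0 ≤ eNorm z := Real.sqrt_nonneg _

lemma eNorm_add_le (a b : Cn n) : eNorm (a + b) ≤ eNorm a + eNorm b := by
  rw [eNorm_def, eNorm_def, eNorm_def]
  exact norm_add_le _ _

lemma eNorm_neg (a : Cn n) : eNorm (-a) = eNorm a := by
  rw [eNorm_def, eNorm_def]; exact norm_neg _

lemma eNorm_sub_rev (a b : Cn n) : eNorm (a - b) = eNorm (b - a) := by
  rw [← eNorm_neg (a - b)]; congr 1; abel

lemma eNorm_le_sqrt_mul_norm (z : Cn n) : eNorm z ≤ Real.sqrt n * ‖z‖ := by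
  have h1 : eNorm z ≤ Real.sqrt (∑ _i : Fin n, ‖z‖ ^ 2) := by
    apply Real.sqrt_le_sqrt
    exact Finset.sum_le_sum fun i _ =>
      pow_le_pow_left₀ (norm_nonneg _) (norm_le_pi_norm z i) 2
  calc eNorm z ≤ Real.sqrt (∑ _i : Fin n, ‖z‖ ^ 2) := h1
    _ = Real.sqrt n * ‖z‖ := by
        rw [Finset.sum_const, Finset.card_univ, Fintype.card_fin, nsmul_eq_mul,
          Real.sqrt_mul (Nat.cast_nonneg n), Real.sqrt_sq (norm_nonneg _)]

lemma herm_re (a b : Cn n) :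
    eNorm (a - b) ^ 2 = eNorm a ^ 2 - 2 * (herm a b).re + eNorm b ^ 2 := by
  have key : ∀ x y : EuclideanSpace ℂ (Fin n),
      ‖x - y‖ ^ 2 = ‖x‖ ^ 2 - 2 * (inner ℂ x y : ℂ).re + ‖y‖ ^ 2 := fun x y => by
    have := @norm_sub_sq ℂ _ _ _ _ x y
    simpa using this
  have ha := key ((WithLp.equiv 2 (Cn n)).symm a) ((WithLp.equiv 2 (Cn n)).symm b)
  have hrepr : (herm a b).re
      = (inner ℂ ((WithLp.equiv 2 (Cn n)).symm a) ((WithLp.equiv 2 (Cn n)).symm b) : ℂ).re := by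
    have : (inner ℂ ((WithLp.equiv 2 (Cn n)).symm a) ((WithLp.equiv 2 (Cn n)).symm b) : ℂ)
        = ∑ i, (starRingEnd ℂ) (a i) * (b i) := by
      simp [PiLp.inner_apply, RCLike.inner_apply, mul_comm]
    rw [this, herm]
    rw [Complex.re_sum, Complex.re_sum]
    congr 1; funext i
    rw [show a i * (starRingEnd ℂ) (b i) = (starRingEnd ℂ) ((starRingEnd ℂ) (a i) * b i) by
      rw [map_mul, Complex.conj_conj]]
    exact (Complex.conj_re _).symm
  rw [eNorm_def, eNorm_def, eNorm_def, hrepr]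
  exact ha

/-- Sub-mean value property on circles, for entire functions. -/
lemma circle_submean {f : ℂ → ℂ} (hf : Differentiable ℂ f) (c : ℂ) {r : ℝ} (hr : 0 < r) :
    2 * Real.pi * ‖f c‖ ≤ ∫ θ in (0:ℝ)..(2 * Real.pi), ‖f (circleMap c r θ)‖ := by
  have h1 : (∮ z in C(c, r), (z - c)⁻¹ • f z) = (2 * Real.pi * Complex.I) • f c :=
    (hf.diffContOnCl).circleIntegral_sub_inv_smul (Metric.mem_ball_self hr)
  have h2 : (∮ z in C(c, r), (z - c)⁻¹ • f z)
      = ∫ θ in (0:ℝ)..(2 * Real.pi), Complex.I * f (circleMap c r θ) := by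
    simp only [circleIntegral, deriv_circleMap, circleMap_sub_center, smul_eq_mul]
    congr 1; funext θ
    have hne : circleMap 0 r θ ≠ 0 := circleMap_ne_center hr.ne'
    field_simp
  have h3 : ∫ θ in (0:ℝ)..(2 * Real.pi), Complex.I * f (circleMap c r θ)
      = Complex.I * ∫ θ in (0:ℝ)..(2 * Real.pi), f (circleMap c r θ) := by
    exact intervalIntegral.integral_const_mul _ _
  have h4 : (∫ θ in (0:ℝ)..(2 * Real.pi), f (circleMap c r θ)) = (2 * Real.pi) * f c := by
    have := h1.symm.trans (h2.trans h3)
    have hI : Complex.I ≠ 0 := Complex.I_ne_zero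
    field_simp [smul_eq_mul] at this ⊢
    -- this : 2 * π * I * f c = I * ∫ ...
    apply mul_left_cancel₀ hI
    rw [← this]; ring
  have h5 : ‖∫ θ in (0:ℝ)..(2 * Real.pi), f (circleMap c r θ)‖
      ≤ ∫ θ in (0:ℝ)..(2 * Real.pi), ‖f (circleMap c r θ)‖ :=
    intervalIntegral.norm_integral_le_integral_norm (by positivity)
  have h6 : ‖(2 * (Real.pi : ℂ)) * f c‖ = 2 * Real.pi * ‖f c‖ := by
    rw [norm_mul]
    congr 1
    rw [show (2 * (Real.pi:ℂ)) = ((2 * Real.pi : ℝ) : ℂ) by push_cast; ring,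
      Complex.norm_real, Real.norm_eq_abs, abs_of_pos (by positivity)]
  calc 2 * Real.pi * ‖f c‖ = ‖(2 * (Real.pi : ℂ)) * f c‖ := h6.symm
    _ = ‖∫ θ in (0:ℝ)..(2 * Real.pi), f (circleMap c r θ)‖ := by rw [h4]
    _ ≤ _ := h5

end WienerAux
namespace WienerAux2
open WienerAux Set Metric

open intervalIntegral in
lemma integral_onehalf : (∫ x in (0:ℝ)..1, x) = 1/2 := by
  rw [integral_id]; norm_num

lemma cont_intOn {X : Type*} [MeasureSpace X] [TopologicalSpace X] [OpensMeasurableSpace X]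
    [T2Space X] [IsLocallyFiniteMeasure (volume : Measure X)]
    {f : X → ℝ} (hf : Continuous f) {s : Set X} (hs : IsCompact s) :
    IntegrableOn f s volume :=
  (hf.locallyIntegrable).integrableOn_isCompact hs

/-- Polar symm as explicit exponential. -/
lemma polar_symm_eq (p : ℝ × ℝ) :
    Complex.polarCoord.symm p = (p.1 : ℂ) * Complex.exp (p.2 * Complex.I) := by
  rw [Complex.polarCoord_symm_apply, Complex.exp_mul_I, Complex.ofReal_cos,
    Complex.ofReal_sin]

/-- Area sub-mean value property on the unit disc, for entire functions. -/
lemma area_submean {f : ℂ → ℂ} (hf : Differentiable ℂ f) (c : ℂ) :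
    Real.pi * ‖f c‖ ≤ ∫ u in closedBall c 1, ‖f u‖ := by
  have hfc : Continuous fun u => ‖f u‖ := hf.continuous.norm
  set e : ℝ × ℝ → ℂ := fun p => (p.1 : ℂ) * Complex.exp (p.2 * Complex.I) with he
  have hecont : Continuous e := by
    apply Continuous.mul (by continuity)
    exact Complex.continuous_exp.comp (by continuity)
  set T' : Set (ℝ × ℝ) := Set.Ioc (0:ℝ) 1 ×ˢ Set.Ioo (-Real.pi) Real.pi with hT'
  have hT'm : MeasurableSet T' := measurableSet_Ioc.prod measurableSet_Ioo
  set F : ℝ × ℝ → ℝ := fun p => p.1 * ‖f (c + e p)‖ with hF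
  have hFcont : Continuous F := by
    apply Continuous.mul continuous_fst
    exact hfc.comp (continuous_const.add hecont)
  have hFint : IntegrableOn F T' := by
    have hsub : T' ⊆ Set.Icc (0:ℝ) 1 ×ˢ Set.Icc (-Real.pi) Real.pi := by
      intro p hp
      exact ⟨⟨hp.1.1.le, hp.1.2⟩, ⟨hp.2.1.le, hp.2.2.le⟩⟩
    exact (cont_intOn hFcont (isCompact_Icc.prod isCompact_Icc)).mono_set hsub
  -- step A: translate
  have hA : (∫ u in closedBall c 1, ‖f u‖) = ∫ u in closedBall (0:ℂ) 1, ‖f (c + u)‖ := by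
    have hmp : MeasurePreserving (fun u : ℂ => c + u) volume volume :=
      measurePreserving_add_left volume c
    have hpre : (fun u : ℂ => c + u) ⁻¹' closedBall c 1 = closedBall (0:ℂ) 1 := by
      ext u
      simp [Metric.mem_closedBall, dist_eq_norm]
    rw [← hpre]
    exact (hmp.setIntegral_preimage_emb (MeasurableEquiv.addLeft c).measurableEmbedding
      (fun u => ‖f u‖) _).symm
  -- step B+C+D: polar coordinates
  set ind : ℂ → ℝ := (closedBall (0:ℂ) 1).indicator (fun u => ‖f (c + u)‖) with hind
  have hB : (∫ u in closedBall (0:ℂ) 1, ‖f (c + u)‖) = ∫ u, ind u :=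
    (integral_indicator (measurableSet_closedBall)).symm
  have hC : (∫ u, ind u) = ∫ p in Complex.polarCoord.target, p.1 • ind (Complex.polarCoord.symm p) :=
    (Complex.integral_comp_polarCoord_symm ind).symm
  have hD : (∫ p in Complex.polarCoord.target, p.1 • ind (Complex.polarCoord.symm p))
      = ∫ p in T', F p := by
    rw [← integral_indicator hT'm, ← integral_indicator]
    · congr 1
      funext p
      by_cases hp : p ∈ T'
      · have hptgt : p ∈ Complex.polarCoord.target := by
          rw [Complex.polarCoord_target]
          exact ⟨hp.1.1, hp.2⟩
        rw [Set.indicator_of_mem hptgt, Set.indicator_of_mem hp]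
        have hmem : Complex.polarCoord.symm p ∈ closedBall (0:ℂ) 1 := by
          rw [mem_closedBall_zero_iff]
          show ‖Complex.polarCoord.symm p‖ ≤ 1
          rw [Complex.norm_polarCoord_symm, abs_of_pos hp.1.1]
          exact hp.1.2
        rw [hF, hind, Set.indicator_of_mem hmem, smul_eq_mul, polar_symm_eq]
      · by_cases hptgt : p ∈ Complex.polarCoord.target
        · rw [Set.indicator_of_mem hptgt, Set.indicator_of_notMem hp]
          have h1 : p.1 > 1 := by
            rw [Complex.polarCoord_target] at hptgt
            by_contra hle
            exact hp ⟨⟨hptgt.1, not_lt.mp hle⟩, hptgt.2⟩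
          have : Complex.polarCoord.symm p ∉ closedBall (0:ℂ) 1 := by
            rw [mem_closedBall_zero_iff]
            show ¬ ‖Complex.polarCoord.symm p‖ ≤ 1
            rw [Complex.norm_polarCoord_symm]
            rw [abs_of_pos (by linarith)]
            linarith
          rw [hind, Set.indicator_of_notMem this, smul_zero]
        · rw [Set.indicator_of_notMem hptgt, Set.indicator_of_notMem hp]
    · rw [Complex.polarCoord_target]
      exact measurableSet_Ioi.prod measurableSet_Ioo
  -- step E: Fubini
  have hE : (∫ p in T', F p)
      = ∫ r in Set.Ioc (0:ℝ) 1, ∫ θ in Set.Ioo (-Real.pi) Real.pi, F (r, θ) := by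
    rw [hT']
    exact setIntegral_prod F hFint
  -- step F: inner circle bound
  have hFinner : ∀ r ∈ Set.Ioc (0:ℝ) 1,
      2 * Real.pi * ‖f c‖ * r ≤ ∫ θ in Set.Ioo (-Real.pi) Real.pi, F (r, θ) := by
    intro r hr
    have hcirc' : ∀ θ : ℝ, F (r, θ) = r * ‖f (circleMap c r θ)‖ := by
      intro θ
      rw [hF]
      simp only [circleMap, he]
    have step1 : (∫ θ in Set.Ioo (-Real.pi) Real.pi, F (r, θ))
        = r * ∫ θ in Set.Ioo (-Real.pi) Real.pi, ‖f (circleMap c r θ)‖ := by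
      simp_rw [hcirc']
      exact integral_const_mul r _
    have hper : Function.Periodic (fun θ : ℝ => ‖f (circleMap c r θ)‖) (2 * Real.pi) := by
      intro θ
      simp only [circleMap]
      congr 3
      push_cast
      rw [add_mul, Complex.exp_add, Complex.exp_two_pi_mul_I, mul_one]
    have step2 : (∫ θ in Set.Ioo (-Real.pi) Real.pi, ‖f (circleMap c r θ)‖)
        = ∫ θ in (0:ℝ)..(2 * Real.pi), ‖f (circleMap c r θ)‖ := by
      rw [← integral_Ioc_eq_integral_Ioo,
        ← _root_.intervalIntegral.integral_of_le
          (by linarith [Real.pi_pos] : -Real.pi ≤ Real.pi)]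
      have := hper.intervalIntegral_add_eq (-Real.pi) 0
      rw [show -Real.pi + 2 * Real.pi = Real.pi by ring, zero_add] at this
      exact this
    rw [step1, step2]
    have := circle_submean hf c hr.1
    calc 2 * Real.pi * ‖f c‖ * r = r * (2 * Real.pi * ‖f c‖) := by ring
      _ ≤ r * ∫ θ in (0:ℝ)..(2 * Real.pi), ‖f (circleMap c r θ)‖ :=
          mul_le_mul_of_nonneg_left this hr.1.le
  -- step G: outer bound
  have hmarg : IntegrableOn (fun r => ∫ θ in Set.Ioo (-Real.pi) Real.pi, F (r, θ))
      (Set.Ioc (0:ℝ) 1) := by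
    have : Integrable F ((volume.restrict (Set.Ioc (0:ℝ) 1)).prod
        (volume.restrict (Set.Ioo (-Real.pi) Real.pi))) := by
      rw [Measure.prod_restrict]
      exact hFint
    exact this.integral_prod_left
  have hG : Real.pi * ‖f c‖ ≤ ∫ r in Set.Ioc (0:ℝ) 1,
      ∫ θ in Set.Ioo (-Real.pi) Real.pi, F (r, θ) := by
    have hle : (∫ r in Set.Ioc (0:ℝ) 1, 2 * Real.pi * ‖f c‖ * r)
        ≤ ∫ r in Set.Ioc (0:ℝ) 1, ∫ θ in Set.Ioo (-Real.pi) Real.pi, F (r, θ) := by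
      apply setIntegral_mono_on _ hmarg measurableSet_Ioc hFinner
      exact ((continuous_const.mul continuous_id).locallyIntegrable).integrableOn_isCompact
        isCompact_Icc |>.mono_set Set.Ioc_subset_Icc_self
    have hval : (∫ r in Set.Ioc (0:ℝ) 1, 2 * Real.pi * ‖f c‖ * r) = Real.pi * ‖f c‖ := by
      simp_rw [mul_comm (2 * Real.pi * ‖f c‖)]
      rw [integral_mul_const]
      rw [← _root_.intervalIntegral.integral_of_le (by norm_num : (0:ℝ) ≤ 1)]
      rw [show (∫ x in (0:ℝ)..1, x) = 1/2 from integral_onehalf]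
      ring
    linarith
  rw [hA, hB, hC, hD, hE]
  exact hG

end WienerAux2
namespace WienerAux3
open WienerAux WienerAux2 Set Metric

lemma area_submean_lintegral {f : ℂ → ℂ} (hf : Differentiable ℂ f) (c : ℂ) :
    ENNReal.ofReal Real.pi * ENNReal.ofReal ‖f c‖
      ≤ ∫⁻ u in closedBall c 1, ENNReal.ofReal ‖f u‖ := by
  have hInt : IntegrableOn (fun u => ‖f u‖) (closedBall c 1) :=
    cont_intOn hf.continuous.norm (isCompact_closedBall c 1)
  have h1 : ENNReal.ofReal (∫ u in closedBall c 1, ‖f u‖)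
      = ∫⁻ u in closedBall c 1, ENNReal.ofReal ‖f u‖ :=
    ofReal_integral_eq_lintegral_ofReal hInt (Filter.Eventually.of_forall fun x => norm_nonneg _)
  rw [← ENNReal.ofReal_mul Real.pi_pos.le, ← h1]
  exact ENNReal.ofReal_le_ofReal (area_submean hf c)

lemma diff_insertNth {n : ℕ} (a : ℂ) :
    Differentiable ℂ (fun y : Cn n => (Fin.insertNth 0 a y : Cn (n + 1))) := by
  rw [differentiable_pi]
  intro i
  simp only [Fin.insertNth_zero']
  refine Fin.cases ?_ ?_ i
  · simp only [Fin.cons_zero]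
    exact differentiable_const a
  · intro j
    simp only [Fin.cons_succ]
    exact (ContinuousLinearMap.proj (R := ℂ) (φ := fun _ : Fin n => ℂ) j).differentiable

lemma diff_insertNth' {n : ℕ} (y : Cn n) :
    Differentiable ℂ (fun a : ℂ => (Fin.insertNth 0 a y : Cn (n + 1))) := by
  rw [differentiable_pi]
  intro i
  simp only [Fin.insertNth_zero']
  refine Fin.cases ?_ ?_ i
  · simp only [Fin.cons_zero]
    exact differentiable_id
  · intro j
    simp only [Fin.cons_succ]
    exact differentiable_const (y j)

/-- Sub-mean value property on unit polydiscs for entire functions on ℂⁿ. -/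
lemma polydisc_submean : ∀ {n : ℕ} {f : Cn n → ℂ}, Differentiable ℂ f → ∀ z : Cn n,
    (ENNReal.ofReal Real.pi) ^ n * ENNReal.ofReal ‖f z‖
      ≤ ∫⁻ ζ in closedBall z 1, ENNReal.ofReal ‖f ζ‖ := by
  intro n
  induction n with
  | zero =>
      intro f hf z
      have hball : closedBall z (1:ℝ) = Set.univ := by
        apply Set.eq_univ_iff_forall.mpr
        intro x
        rw [mem_closedBall, Subsingleton.elim x z, dist_self]
        norm_num
      rw [hball, Measure.restrict_univ, pow_zero, one_mul]
      have hconst : (fun x : Cn 0 => ENNReal.ofReal ‖f x‖)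
          = fun _ => ENNReal.ofReal ‖f z‖ := funext fun x => by rw [Subsingleton.elim x z]
      have hvol : (volume : Measure (Cn 0)) Set.univ = 1 := by
        simp [MeasureTheory.volume_pi, Measure.pi_univ]
      rw [hconst, lintegral_const, hvol, mul_one]
  | succ n IH =>
      intro f hf z
      set e := MeasurableEquiv.piFinSuccAbove (fun _ : Fin (n + 1) => ℂ) 0 with he
      have hmp : MeasurePreserving e volume ((volume : Measure ℂ).prod (volume : Measure (Cn n))) :=
        measurePreserving_piFinSuccAbove (fun _ => volume) 0
      set s : Set ℂ := closedBall (z 0) 1 with hs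
      set tt : Set (Cn n) := closedBall (Fin.tail z) 1 with htt
      have hst : MeasurableSet (s ×ˢ tt) :=
        measurableSet_closedBall.prod measurableSet_closedBall
      have hesymm : ∀ (a : ℂ) (y : Cn n), e.symm (a, y) = Fin.insertNth 0 a y := fun _ _ => rfl
      have hpre : e ⁻¹' (s ×ˢ tt) = closedBall z 1 := by
        ext x
        simp only [Set.mem_preimage, Set.mem_prod, he, MeasurableEquiv.piFinSuccAbove_apply,
          Fin.succAbove_zero, hs, htt, mem_closedBall]
        rw [dist_pi_le_iff zero_le_one, dist_pi_le_iff zero_le_one]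
        constructor
        · rintro ⟨h0, hsucc⟩ i
          refine Fin.cases ?_ ?_ i
          · exact h0
          · intro j; exact hsucc j
        · intro h
          exact ⟨h 0, fun j => h j.succ⟩
      have hgsymm : (fun x : Cn (n+1) => ENNReal.ofReal ‖f (e.symm (e x))‖)
          = fun x => ENNReal.ofReal ‖f x‖ := by
        funext x; rw [e.symm_apply_apply]
      have hcov : (∫⁻ ζ in closedBall z 1, ENNReal.ofReal ‖f ζ‖)
          = ∫⁻ p in s ×ˢ tt, ENNReal.ofReal ‖f (e.symm p)‖
              ∂((volume : Measure ℂ).prod (volume : Measure (Cn n))) := by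
        rw [← hpre]
        have := (hmp.restrict_preimage hst).lintegral_comp_emb e.measurableEmbedding
          (fun p => ENNReal.ofReal ‖f (e.symm p)‖)
        rw [← this]
        simp only [hgsymm]
      have hmeas : Measurable fun p : ℂ × Cn n => ENNReal.ofReal ‖f (e.symm p)‖ :=
        ENNReal.measurable_ofReal.comp
          ((hf.continuous.norm.measurable).comp e.symm.measurable)
      have hprod : (∫⁻ p in s ×ˢ tt, ENNReal.ofReal ‖f (e.symm p)‖
            ∂((volume : Measure ℂ).prod (volume : Measure (Cn n))))
          = ∫⁻ a in s, ∫⁻ y in tt, ENNReal.ofReal ‖f (e.symm (a, y))‖ := by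
        rw [← Measure.prod_restrict]
        exact MeasureTheory.lintegral_prod _ hmeas.aemeasurable
      have hinner : ∀ a : ℂ,
          (ENNReal.ofReal Real.pi) ^ n * ENNReal.ofReal ‖f (e.symm (a, Fin.tail z))‖
            ≤ ∫⁻ y in tt, ENNReal.ofReal ‖f (e.symm (a, y))‖ := by
        intro a
        have hfa : Differentiable ℂ (fun y : Cn n => f (e.symm (a, y))) := by
          have : (fun y : Cn n => f (e.symm (a, y)))
              = f ∘ (fun y : Cn n => (Fin.insertNth 0 a y : Cn (n+1))) := by
            funext y; rw [hesymm]; rfl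
          rw [this]
          exact hf.comp (diff_insertNth a)
        exact IH hfa (Fin.tail z)
      set g : ℂ → ℂ := fun a => f (e.symm (a, Fin.tail z)) with hg
      have hgd : Differentiable ℂ g := by
        have : g = f ∘ (fun a : ℂ => (Fin.insertNth 0 a (Fin.tail z) : Cn (n+1))) := by
          funext a
          show f (e.symm (a, Fin.tail z)) = f (Fin.insertNth 0 a (Fin.tail z))
          rw [hesymm]
        rw [this]
        exact hf.comp (diff_insertNth' (Fin.tail z))
      have hgz : g (z 0) = f z := by
        show f (e.symm (z 0, Fin.tail z)) = f z
        rw [hesymm, Fin.insertNth_zero', Fin.cons_self_tail]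
      calc (ENNReal.ofReal Real.pi) ^ (n + 1) * ENNReal.ofReal ‖f z‖
          = (ENNReal.ofReal Real.pi) ^ n
              * (ENNReal.ofReal Real.pi * ENNReal.ofReal ‖f z‖) := by
            rw [pow_succ]; ring
        _ ≤ (ENNReal.ofReal Real.pi) ^ n * ∫⁻ a in s, ENNReal.ofReal ‖g a‖ := by
            apply mul_le_mul_right
            rw [← hgz]
            exact area_submean_lintegral hgd (z 0)
        _ = ∫⁻ a in s, (ENNReal.ofReal Real.pi) ^ n * ENNReal.ofReal ‖g a‖ :=
            (lintegral_const_mul' _ _ (ENNReal.pow_ne_top ENNReal.ofReal_ne_top)).symm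
        _ ≤ ∫⁻ a in s, ∫⁻ y in tt, ENNReal.ofReal ‖f (e.symm (a, y))‖ :=
            lintegral_mono fun a => hinner a
        _ = ∫⁻ ζ in closedBall z 1, ENNReal.ofReal ‖f ζ‖ := by
            rw [hcov, hprod]

end WienerAux3
namespace WienerAux4
open WienerAux WienerAux2 WienerAux3 Set Metric

variable {n : ℕ} {t : ℝ}

/-- Cauchy-type estimate: the derivative of an entire function is controlled by the sup of the
function on the unit ball. -/
lemma fderiv_norm_le {g : Cn n → ℂ} (hg : Differentiable ℂ g) {x : Cn n} {M : ℝ}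
    (hM : ∀ ζ ∈ closedBall x 1, ‖g ζ‖ ≤ M) : ‖fderiv ℂ g x‖ ≤ M := by
  have hM0 : 0 ≤ M := (norm_nonneg _).trans (hM x (mem_closedBall_self zero_le_one))
  apply ContinuousLinearMap.opNorm_le_bound _ hM0
  intro v
  rcases eq_or_ne v 0 with rfl | hv
  · simp
  · have hvpos : 0 < ‖v‖ := norm_pos_iff.mpr hv
    set ρ : ℝ := ‖v‖⁻¹ with hρdef
    have hρ : 0 < ρ := inv_pos.mpr hvpos
    set h : ℂ → ℂ := fun lam => g (x + lam • v) with hh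
    have hφ : Differentiable ℂ (fun lam : ℂ => x + lam • v) :=
      (differentiable_id.smul_const v).const_add x
    have hhd : Differentiable ℂ h := hg.comp hφ
    have hderiv : HasDerivAt h (fderiv ℂ g x v) 0 := by
      have h1 : HasDerivAt (fun lam : ℂ => x + lam • v) v 0 := by
        have := (hasDerivAt_id (0:ℂ)).smul_const v
        simpa using this.const_add x
      have h2 := (hg.differentiableAt.hasFDerivAt).comp_hasDerivAt 0 h1
      simpa [hh, Function.comp_def] using h2
    have hsphere : ∀ lam ∈ Metric.sphere (0:ℂ) ρ, ‖h lam‖ ≤ M := by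
      intro lam hlam
      apply hM
      rw [mem_closedBall]
      have : dist (x + lam • v) x = ‖lam‖ * ‖v‖ := by
        rw [dist_eq_norm]
        simp [norm_smul]
      rw [this]
      rw [mem_sphere_zero_iff_norm] at hlam
      rw [hlam, hρdef]
      rw [inv_mul_cancel₀ hvpos.ne']
    have hle : ‖Complex.cderiv ρ h 0‖ ≤ M / ρ := Complex.norm_cderiv_le hρ hsphere
    have heq : Complex.cderiv ρ h 0 = deriv h 0 :=
      Complex.cderiv_eq_deriv isOpen_univ hhd.differentiableOn hρ (subset_univ _)
    rw [hderiv.deriv] at heq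
    rw [← heq] at hderiv ⊢
    calc ‖Complex.cderiv ρ h 0‖ ≤ M / ρ := hle
      _ = M * ‖v‖ := by rw [hρdef, div_eq_mul_inv, inv_inv]

lemma exp_factor_le (ht : 0 < t) {a b : ℝ} (hab : a ≤ b) (h0 : 0 ≤ a) (c : ℝ) :
    Real.exp ((a ^ 2 + c) / (2 * t)) ≤ Real.exp ((b ^ 2 + c) / (2 * t)) := by
  apply Real.exp_le_exp.mpr
  apply div_le_div_of_nonneg_right ?_ ?_ |>.trans_eq rfl
  · apply add_le_add_left
    exact pow_le_pow_left₀ h0 hab 2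
  · positivity

lemma eNorm_mem_ball (z : Cn n) {ζ : Cn n} (hζ : ζ ∈ closedBall z 1) :
    eNorm ζ ≤ eNorm z + Real.sqrt n := by
  have h1 : eNorm ζ ≤ eNorm z + eNorm (ζ - z) := by
    have := eNorm_add_le z (ζ - z)
    simpa using this
  have h2 : eNorm (ζ - z) ≤ Real.sqrt n * ‖ζ - z‖ := eNorm_le_sqrt_mul_norm _
  have h3 : ‖ζ - z‖ ≤ 1 := by
    rw [mem_closedBall, dist_eq_norm] at hζ
    exact hζ
  have h4 : eNorm (ζ - z) ≤ Real.sqrt n := by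
    calc eNorm (ζ - z) ≤ Real.sqrt n * ‖ζ - z‖ := h2
      _ ≤ Real.sqrt n * 1 := by
          apply mul_le_mul_of_nonneg_left h3 (Real.sqrt_nonneg _)
      _ = Real.sqrt n := mul_one _
  linarith

lemma lintegral_sub_left (w : Cn n) (H : Cn n → ℝ) :
    (∫⁻ ζ, ENNReal.ofReal (H (w - ζ))) = ∫⁻ x, ENNReal.ofReal (H x) := by
  conv_rhs => rw [← Measure.map_sub_left_eq_self (volume : Measure (Cn n)) w]
  rw [show (fun ζ : Cn n => w - ζ) = ⇑(MeasurableEquiv.subLeft w) from rfl]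
  rw [lintegral_map_equiv]
  rfl

/-- Pointwise bound for a Wiener kernel in terms of the `L¹`-norm of a dominating function. -/
lemma kernel_pointwise_bound (ht : 0 < t) {k : Cn n → Cn n → ℂ}
    (hd : ∀ w : Cn n, Differentiable ℂ fun z => k w z)
    {H : Cn n → ℝ} (hHi : Integrable H)
    (hdom : ∀ w z : Cn n, ‖k w z‖
      ≤ Real.exp ((eNorm z ^ 2 + eNorm w ^ 2) / (2 * t)) * H (w - z))
    (w z : Cn n) :
    Real.pi ^ n * ‖k w z‖
      ≤ Real.exp (((eNorm z + Real.sqrt n) ^ 2 + eNorm w ^ 2) / (2 * t)) * ∫ x, H x := by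
  have hHnn : ∀ x, 0 ≤ H x := by
    intro x
    have h := (norm_nonneg (k x 0)).trans (hdom x 0)
    rw [sub_zero] at h
    nlinarith [Real.exp_pos ((eNorm (0 : Cn n) ^ 2 + eNorm x ^ 2) / (2 * t))]
  set E : ℝ := Real.exp (((eNorm z + Real.sqrt n) ^ 2 + eNorm w ^ 2) / (2 * t)) with hE
  have hInn : 0 ≤ ∫ x, H x := integral_nonneg hHnn
  have key : ENNReal.ofReal (Real.pi ^ n * ‖k w z‖) ≤ ENNReal.ofReal (E * ∫ x, H x) := by
    have step1 : ENNReal.ofReal (Real.pi ^ n * ‖k w z‖)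
        ≤ ∫⁻ ζ in closedBall z 1, ENNReal.ofReal ‖k w ζ‖ := by
      rw [ENNReal.ofReal_mul (by positivity), ENNReal.ofReal_pow Real.pi_pos.le]
      exact polydisc_submean (hd w) z
    have step2 : (∫⁻ ζ in closedBall z 1, ENNReal.ofReal ‖k w ζ‖)
        ≤ ∫⁻ ζ in closedBall z 1, ENNReal.ofReal E * ENNReal.ofReal (H (w - ζ)) := by
      rw [← lintegral_indicator measurableSet_closedBall,
        ← lintegral_indicator measurableSet_closedBall]
      apply lintegral_mono
      intro ζ
      by_cases hζ : ζ ∈ closedBall z 1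
      · rw [Set.indicator_of_mem hζ, Set.indicator_of_mem hζ]
        calc ENNReal.ofReal ‖k w ζ‖
            ≤ ENNReal.ofReal (Real.exp ((eNorm ζ ^ 2 + eNorm w ^ 2) / (2 * t)) * H (w - ζ)) :=
              ENNReal.ofReal_le_ofReal (hdom w ζ)
          _ = ENNReal.ofReal (Real.exp ((eNorm ζ ^ 2 + eNorm w ^ 2) / (2 * t)))
                * ENNReal.ofReal (H (w - ζ)) := ENNReal.ofReal_mul (Real.exp_pos _).le
          _ ≤ ENNReal.ofReal E * ENNReal.ofReal (H (w - ζ)) := by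
              apply mul_le_mul_left
              apply ENNReal.ofReal_le_ofReal
              exact exp_factor_le ht (eNorm_mem_ball z hζ) (eNorm_nonneg ζ) _
      · rw [Set.indicator_of_notMem hζ, Set.indicator_of_notMem hζ]
    have step3 : (∫⁻ ζ in closedBall z 1, ENNReal.ofReal E * ENNReal.ofReal (H (w - ζ)))
        = ENNReal.ofReal E * ∫⁻ ζ in closedBall z 1, ENNReal.ofReal (H (w - ζ)) :=
      lintegral_const_mul' _ _ ENNReal.ofReal_ne_top
    have step4 : (∫⁻ ζ in closedBall z 1, ENNReal.ofReal (H (w - ζ)))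
        ≤ ∫⁻ x, ENNReal.ofReal (H x) := by
      calc (∫⁻ ζ in closedBall z 1, ENNReal.ofReal (H (w - ζ)))
          ≤ ∫⁻ ζ, ENNReal.ofReal (H (w - ζ)) := setLIntegral_le_lintegral _ _
        _ = ∫⁻ x, ENNReal.ofReal (H x) := lintegral_sub_left w H
    have step5 : (∫⁻ x, ENNReal.ofReal (H x)) = ENNReal.ofReal (∫ x, H x) :=
      (ofReal_integral_eq_lintegral_ofReal hHi
        (Filter.Eventually.of_forall hHnn)).symm
    calc ENNReal.ofReal (Real.pi ^ n * ‖k w z‖)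
        ≤ ∫⁻ ζ in closedBall z 1, ENNReal.ofReal ‖k w ζ‖ := step1
      _ ≤ ∫⁻ ζ in closedBall z 1, ENNReal.ofReal E * ENNReal.ofReal (H (w - ζ)) := step2
      _ = ENNReal.ofReal E * ∫⁻ ζ in closedBall z 1, ENNReal.ofReal (H (w - ζ)) := step3
      _ ≤ ENNReal.ofReal E * ∫⁻ x, ENNReal.ofReal (H x) := mul_le_mul_right step4 _
      _ = ENNReal.ofReal E * ENNReal.ofReal (∫ x, H x) := by rw [step5]
      _ = ENNReal.ofReal (E * ∫ x, H x) := (ENNReal.ofReal_mul (Real.exp_pos _).le).symm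
  rw [ENNReal.ofReal_le_ofReal_iff (by positivity)] at key
  exact key

end WienerAux4
namespace WienerAux5
open WienerAux WienerAux2 WienerAux3 WienerAux4 Set Metric

variable {n : ℕ} {t : ℝ}

lemma eNorm_sub_le (a b : Cn n) : eNorm (a - b) ≤ eNorm a + eNorm b := by
  have := eNorm_add_le a (-b)
  rw [eNorm_neg] at this
  simpa [sub_eq_add_neg] using this

lemma diff_herm (w : Cn n) : Differentiable ℂ (fun ζ : Cn n => herm ζ w) := by
  unfold herm
  apply Differentiable.fun_sum
  intro i _
  exact ((ContinuousLinearMap.proj (R := ℂ) (φ := fun _ : Fin n => ℂ) i).differentiable).mul_const _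

/-- Pointwise bound for an a.e.-dominated kernel, with a polynomially worse constant depending
only on `w - z`.  Uses the holomorphic weight `exp(-⟨ζ,w⟩/t)`. -/
lemma weighted_pointwise_bound (ht : 0 < t) {K : Cn n → Cn n → ℂ}
    (hd : ∀ w : Cn n, Differentiable ℂ fun z => K w z)
    {Φ : Cn n → ℝ} (hΦi : Integrable Φ) (hΦnn : ∀ x, 0 ≤ Φ x)
    (hdom : ∀ w : Cn n, ∀ᵐ ζ : Cn n, ‖K w ζ‖
      ≤ Real.exp ((eNorm ζ ^ 2 + eNorm w ^ 2) / (2 * t)) * Φ (w - ζ))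
    (w z : Cn n) :
    Real.pi ^ n * ‖K w z‖ ≤ Real.exp ((eNorm z ^ 2 + eNorm w ^ 2) / (2 * t)) *
      (Real.exp ((2 * Real.sqrt n * eNorm (w - z) + n) / (2 * t)) * ∫ x, Φ x) := by
  set g : Cn n → ℂ := fun ζ => K w ζ * Complex.exp (-(1/(t:ℂ)) * herm ζ w) with hgdef
  have hgd : Differentiable ℂ g := (hd w).mul (((diff_herm w).const_mul _).cexp)
  have hgnorm : ∀ ζ, ‖g ζ‖ = ‖K w ζ‖ * Real.exp (-(1/t) * (herm ζ w).re) := by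
    intro ζ
    rw [hgdef]
    show ‖K w ζ * Complex.exp (-(1/(t:ℂ)) * herm ζ w)‖ = _
    rw [norm_mul]
    congr 1
    rw [Complex.norm_exp]
    congr 1
    rw [show (-(1/(t:ℂ))) = ((-(1/t) : ℝ) : ℂ) by push_cast; ring, Complex.re_ofReal_mul]
  have hids : ∀ ζ : Cn n, (eNorm ζ ^ 2 + eNorm w ^ 2) / (2 * t) + (-(1/t) * (herm ζ w).re)
      = eNorm (ζ - w) ^ 2 / (2 * t) := by
    intro ζ
    rw [herm_re ζ w]
    field_simp
    ring
  have hgb : ∀ᵐ ζ : Cn n, ‖g ζ‖ ≤ Real.exp (eNorm (ζ - w) ^ 2 / (2 * t)) * Φ (w - ζ) := by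
    filter_upwards [hdom w] with ζ hζ
    rw [hgnorm ζ]
    calc ‖K w ζ‖ * Real.exp (-(1/t) * (herm ζ w).re)
        ≤ (Real.exp ((eNorm ζ ^ 2 + eNorm w ^ 2) / (2 * t)) * Φ (w - ζ))
            * Real.exp (-(1/t) * (herm ζ w).re) :=
          mul_le_mul_of_nonneg_right hζ (Real.exp_pos _).le
      _ = Real.exp ((eNorm ζ ^ 2 + eNorm w ^ 2) / (2 * t) + (-(1/t) * (herm ζ w).re))
            * Φ (w - ζ) := by rw [Real.exp_add]; ring
      _ = Real.exp (eNorm (ζ - w) ^ 2 / (2 * t)) * Φ (w - ζ) := by rw [hids ζ]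
  set Cx : ℝ := Real.exp ((eNorm (w - z) + Real.sqrt n) ^ 2 / (2 * t)) with hCx
  have hIpos : 0 ≤ ∫ x, Φ x := integral_nonneg hΦnn
  -- the main chain, as in kernel_pointwise_bound
  have key : Real.pi ^ n * ‖g z‖ ≤ Cx * ∫ x, Φ x := by
    have key' : ENNReal.ofReal (Real.pi ^ n * ‖g z‖) ≤ ENNReal.ofReal (Cx * ∫ x, Φ x) := by
      have step1 : ENNReal.ofReal (Real.pi ^ n * ‖g z‖)
          ≤ ∫⁻ ζ in closedBall z 1, ENNReal.ofReal ‖g ζ‖ := by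
        rw [ENNReal.ofReal_mul (by positivity), ENNReal.ofReal_pow Real.pi_pos.le]
        exact polydisc_submean hgd z
      have step2 : (∫⁻ ζ in closedBall z 1, ENNReal.ofReal ‖g ζ‖)
          ≤ ∫⁻ ζ in closedBall z 1, ENNReal.ofReal Cx * ENNReal.ofReal (Φ (w - ζ)) := by
        rw [← lintegral_indicator measurableSet_closedBall,
          ← lintegral_indicator measurableSet_closedBall]
        apply lintegral_mono_ae
        filter_upwards [hgb] with ζ hζ
        by_cases hmem : ζ ∈ closedBall z 1
        · rw [Set.indicator_of_mem hmem, Set.indicator_of_mem hmem]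
          have hle : eNorm (ζ - w) ≤ eNorm (w - z) + Real.sqrt n := by
            have hrw : ζ - w = (z - w) - (z - ζ) := by abel
            have h1 : eNorm (ζ - w) ≤ eNorm (z - w) + eNorm (z - ζ) := by
              rw [hrw]; exact eNorm_sub_le _ _
            have h2 : eNorm (z - ζ) ≤ Real.sqrt n := by
              calc eNorm (z - ζ) ≤ Real.sqrt n * ‖z - ζ‖ := eNorm_le_sqrt_mul_norm _
                _ ≤ Real.sqrt n * 1 := by
                    apply mul_le_mul_of_nonneg_left _ (Real.sqrt_nonneg _)
                    rw [mem_closedBall, dist_eq_norm] at hmem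
                    rw [show z - ζ = -(ζ - z) by abel, norm_neg]
                    exact hmem
                _ = Real.sqrt n := mul_one _
            rw [eNorm_sub_rev z w] at h1
            linarith
          calc ENNReal.ofReal ‖g ζ‖
              ≤ ENNReal.ofReal (Real.exp (eNorm (ζ - w) ^ 2 / (2 * t)) * Φ (w - ζ)) :=
                ENNReal.ofReal_le_ofReal hζ
            _ = ENNReal.ofReal (Real.exp (eNorm (ζ - w) ^ 2 / (2 * t)))
                  * ENNReal.ofReal (Φ (w - ζ)) := ENNReal.ofReal_mul (Real.exp_pos _).le
            _ ≤ ENNReal.ofReal Cx * ENNReal.ofReal (Φ (w - ζ)) := by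
                apply mul_le_mul_left
                apply ENNReal.ofReal_le_ofReal
                apply Real.exp_le_exp.mpr
                apply div_le_div_of_nonneg_right _ (by positivity)
                exact pow_le_pow_left₀ (eNorm_nonneg _) hle 2
        · rw [Set.indicator_of_notMem hmem, Set.indicator_of_notMem hmem]
      have step3 : (∫⁻ ζ in closedBall z 1, ENNReal.ofReal Cx * ENNReal.ofReal (Φ (w - ζ)))
          = ENNReal.ofReal Cx * ∫⁻ ζ in closedBall z 1, ENNReal.ofReal (Φ (w - ζ)) :=
        lintegral_const_mul' _ _ ENNReal.ofReal_ne_top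
      have step4 : (∫⁻ ζ in closedBall z 1, ENNReal.ofReal (Φ (w - ζ)))
          ≤ ∫⁻ x, ENNReal.ofReal (Φ x) := by
        calc (∫⁻ ζ in closedBall z 1, ENNReal.ofReal (Φ (w - ζ)))
            ≤ ∫⁻ ζ, ENNReal.ofReal (Φ (w - ζ)) := setLIntegral_le_lintegral _ _
          _ = ∫⁻ x, ENNReal.ofReal (Φ x) := lintegral_sub_left w Φ
      have step5 : (∫⁻ x, ENNReal.ofReal (Φ x)) = ENNReal.ofReal (∫ x, Φ x) :=
        (ofReal_integral_eq_lintegral_ofReal hΦi (Filter.Eventually.of_forall hΦnn)).symm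
      calc ENNReal.ofReal (Real.pi ^ n * ‖g z‖)
          ≤ ∫⁻ ζ in closedBall z 1, ENNReal.ofReal ‖g ζ‖ := step1
        _ ≤ ∫⁻ ζ in closedBall z 1, ENNReal.ofReal Cx * ENNReal.ofReal (Φ (w - ζ)) := step2
        _ = ENNReal.ofReal Cx * ∫⁻ ζ in closedBall z 1, ENNReal.ofReal (Φ (w - ζ)) := step3
        _ ≤ ENNReal.ofReal Cx * ∫⁻ x, ENNReal.ofReal (Φ x) := mul_le_mul_right step4 _
        _ = ENNReal.ofReal Cx * ENNReal.ofReal (∫ x, Φ x) := by rw [step5]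
        _ = ENNReal.ofReal (Cx * ∫ x, Φ x) := (ENNReal.ofReal_mul (Real.exp_pos _).le).symm
    rw [ENNReal.ofReal_le_ofReal_iff (by positivity)] at key'
    exact key'
  -- rearrangement
  have hKz : Real.pi ^ n * ‖K w z‖
      = (Real.pi ^ n * ‖g z‖) * Real.exp ((1/t) * (herm z w).re) := by
    rw [hgnorm z, mul_assoc, mul_assoc, ← Real.exp_add,
      show (-(1/t) * (herm z w).re + (1/t) * (herm z w).re) = 0 by ring,
      Real.exp_zero, mul_one]
  have h1 : (1/t) * (herm z w).re
      = (eNorm z ^ 2 + eNorm w ^ 2) / (2 * t) - eNorm (w - z) ^ 2 / (2 * t) := by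
    have h := hids z
    rw [eNorm_sub_rev z w] at h
    linarith
  have hsq : Real.sqrt n ^ 2 = (n:ℝ) := Real.sq_sqrt (Nat.cast_nonneg n)
  have h3 : Cx * Real.exp ((eNorm z ^ 2 + eNorm w ^ 2) / (2 * t) - eNorm (w - z) ^ 2 / (2 * t))
      = Real.exp ((eNorm z ^ 2 + eNorm w ^ 2) / (2 * t))
          * Real.exp ((2 * Real.sqrt n * eNorm (w - z) + n) / (2 * t)) := by
    rw [hCx, ← Real.exp_add, ← Real.exp_add]
    congr 1
    linear_combination hsq / (2 * t)
  calc Real.pi ^ n * ‖K w z‖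
      = (Real.pi ^ n * ‖g z‖) * Real.exp ((1/t) * (herm z w).re) := hKz
    _ ≤ (Cx * ∫ x, Φ x) * Real.exp ((1/t) * (herm z w).re) :=
        mul_le_mul_of_nonneg_right key (Real.exp_pos _).le
    _ = (Cx * Real.exp ((1/t) * (herm z w).re)) * ∫ x, Φ x := by ring
    _ = (Real.exp ((eNorm z ^ 2 + eNorm w ^ 2) / (2 * t))
          * Real.exp ((2 * Real.sqrt n * eNorm (w - z) + n) / (2 * t))) * ∫ x, Φ x := by
        rw [h1, h3]
    _ = Real.exp ((eNorm z ^ 2 + eNorm w ^ 2) / (2 * t)) *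
          (Real.exp ((2 * Real.sqrt n * eNorm (w - z) + n) / (2 * t)) * ∫ x, Φ x) := by ring

end WienerAux5
open WienerAux WienerAux2 WienerAux3 WienerAux4 WienerAux5 in
/-- For every `t > 0`, the normed space `(𝒲_t, ‖·‖_{𝒲_t})` is complete:
every sequence `(k_m)` in `𝒲_t` with `Σ_m ‖k_m‖_{𝒲_t} < ∞` has the property that
`Σ_m k_m` converges pointwise to an element `k ∈ 𝒲_t` with
`‖k‖_{𝒲_t} ≤ Σ_m ‖k_m‖_{𝒲_t}`. -/
theorem wiener_complete (n : ℕ) (t : ℝ) (ht : 0 < t) (k : ℕ → Cn n → Cn n → ℂ)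
    (hk : ∀ m, IsWienerKernel n t (k m))
    (hsum : Summable fun m => wienerNorm n t (k m)) :
    ∃ K : Cn n → Cn n → ℂ, IsWienerKernel n t K ∧
      (∀ w z : Cn n, HasSum (fun m => k m w z) (K w z)) ∧
      wienerNorm n t K ≤ ∑' m, wienerNorm n t (k m) := by
  classical
  have hπt : (0:ℝ) < (Real.pi * t) ^ n := by positivity
  have hπ : (0:ℝ) < Real.pi ^ n := by positivity
  set S : ℕ → Set ℝ := fun m => { c : ℝ | ∃ H : Cn n → ℝ, Integrable H ∧ (∀ x, 0 ≤ H x) ∧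
      (∀ w z : Cn n, ‖k m w z‖
        ≤ Real.exp ((eNorm z ^ 2 + eNorm w ^ 2) / (2 * t)) * H (w - z)) ∧
      c = ∫ x, H x } with hSdef
  have hSne : ∀ m, (S m).Nonempty := fun m => by
    obtain ⟨H, h1, h2, h3⟩ := (hk m).2.2.2
    exact ⟨∫ x, H x, H, h1, h2, h3, rfl⟩
  have hSpos : ∀ m, ∀ c ∈ S m, 0 ≤ c := by
    rintro m c ⟨H, h1, h2, h3, rfl⟩
    exact integral_nonneg h2
  set Sm : ℕ → ℝ := fun m => sInf (S m) with hSmdef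
  have hSm0 : ∀ m, 0 ≤ Sm m := fun m => le_csInf (hSne m) (hSpos m)
  have hwnorm : ∀ m, wienerNorm n t (k m) = ((Real.pi * t) ^ n)⁻¹ * Sm m := fun m => rfl
  have hSmsum : Summable Sm := by
    have h1 : Summable (fun m => (Real.pi * t) ^ n * wienerNorm n t (k m)) := hsum.mul_left _
    apply h1.congr
    intro m
    rw [hwnorm m, ← mul_assoc, mul_inv_cancel₀ hπt.ne', one_mul]
  have choice : ∀ (m : ℕ) (ε : ℝ), 0 < ε → ∃ H : Cn n → ℝ, Integrable H ∧ (∀ x, 0 ≤ H x) ∧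
      (∀ w z : Cn n, ‖k m w z‖
        ≤ Real.exp ((eNorm z ^ 2 + eNorm w ^ 2) / (2 * t)) * H (w - z)) ∧
      (∫ x, H x) < Sm m + ε := by
    intro m ε hε
    obtain ⟨c, hc, hlt⟩ := Real.lt_sInf_add_pos (hSne m) hε
    obtain ⟨H, h1, h2, h3, rfl⟩ := hc
    exact ⟨H, h1, h2, h3, hlt⟩
  -- fixed choice of dominating functions
  choose H0 hH0i hH0nn hH0dom hH0lt using fun m => choice m ((1/2) ^ m) (by positivity)
  set I0 : ℕ → ℝ := fun m => ∫ x, H0 m x with hI0def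
  have hI0nn : ∀ m, 0 ≤ I0 m := fun m => integral_nonneg (hH0nn m)
  have hI0sum : Summable I0 :=
    Summable.of_nonneg_of_le hI0nn (fun m => (hH0lt m).le) (hSmsum.add summable_geometric_two)
  -- pointwise bound for each k m
  have hkb' : ∀ (m : ℕ) (w ζ : Cn n), ‖k m w ζ‖ ≤ (Real.pi ^ n)⁻¹ *
      (Real.exp (((eNorm ζ + Real.sqrt n) ^ 2 + eNorm w ^ 2) / (2 * t)) * I0 m) := by
    intro m w ζ
    have h := kernel_pointwise_bound ht ((hk m).2.1) (hH0i m) (hH0dom m) w ζ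
    calc ‖k m w ζ‖ = (Real.pi ^ n)⁻¹ * (Real.pi ^ n * ‖k m w ζ‖) := by field_simp
      _ ≤ _ := mul_le_mul_of_nonneg_left h (by positivity)
  have hnormsum : ∀ w z : Cn n, Summable fun m => ‖k m w z‖ := by
    intro w z
    apply Summable.of_nonneg_of_le (fun m => norm_nonneg _) (fun m => hkb' m w z)
    exact (hI0sum.mul_left _).mul_left _
  have hsummable : ∀ w z : Cn n, Summable fun m => k m w z := fun w z =>
    (hnormsum w z).of_norm
  set K : Cn n → Cn n → ℂ := fun w z => ∑' m, k m w z with hKdef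
  have hKsum : ∀ w z : Cn n, HasSum (fun m => k m w z) (K w z) := fun w z =>
    (hsummable w z).hasSum
  -- measurability
  have hKmeas : Measurable (fun q : Cn n × Cn n => K q.1 q.2) := by
    apply measurable_of_tendsto_metrizable
      (f := fun N (q : Cn n × Cn n) => ∑ m ∈ Finset.range N, k m q.1 q.2)
      (fun N => Finset.measurable_sum _ (fun m _ => (hk m).1))
    rw [tendsto_pi_nhds]
    intro q
    exact (hKsum q.1 q.2).tendsto_sum_nat
  -- holomorphy in z
  have hKhol : ∀ w : Cn n, Differentiable ℂ fun z => K w z := by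
    intro w x₀
    set R : ℝ := ‖x₀‖ + 1 with hR
    have hRpos : 0 < R := by positivity
    set A : ℝ := (Real.pi ^ n)⁻¹ *
      Real.exp (((Real.sqrt n * (R + 1) + Real.sqrt n) ^ 2 + eNorm w ^ 2) / (2 * t)) with hA
    have hx₀s : x₀ ∈ Metric.ball (0 : Cn n) R := by
      rw [Metric.mem_ball, dist_zero_right]
      exact lt_add_one _
    have hbound : ∀ (m : ℕ) (x : Cn n), x ∈ Metric.ball (0 : Cn n) R →
        ‖fderiv ℂ (fun z => k m w z) x‖ ≤ A * I0 m := by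
      intro m x hx
      apply fderiv_norm_le ((hk m).2.1 w)
      intro ζ hζ
      have hζnorm : ‖ζ‖ ≤ R + 1 := by
        have h1 : ‖ζ - x‖ ≤ 1 := by
          rw [Metric.mem_closedBall, dist_eq_norm] at hζ; exact hζ
        have h2 : ‖x‖ < R := by rwa [Metric.mem_ball, dist_zero_right] at hx
        calc ‖ζ‖ = ‖x + (ζ - x)‖ := by congr 1; abel
          _ ≤ ‖x‖ + ‖ζ - x‖ := norm_add_le _ _
          _ ≤ R + 1 := by linarith
      have heζ : eNorm ζ + Real.sqrt n ≤ Real.sqrt n * (R + 1) + Real.sqrt n := by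
        have h1 := eNorm_le_sqrt_mul_norm ζ
        have h2 : Real.sqrt n * ‖ζ‖ ≤ Real.sqrt n * (R + 1) :=
          mul_le_mul_of_nonneg_left hζnorm (Real.sqrt_nonneg _)
        linarith
      have hexp := exp_factor_le ht heζ
        (add_nonneg (eNorm_nonneg ζ) (Real.sqrt_nonneg _)) (eNorm w ^ 2)
      calc ‖k m w ζ‖
          ≤ (Real.pi ^ n)⁻¹ *
              (Real.exp (((eNorm ζ + Real.sqrt n) ^ 2 + eNorm w ^ 2) / (2 * t)) * I0 m) :=
            hkb' m w ζ
        _ ≤ (Real.pi ^ n)⁻¹ *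
              (Real.exp (((Real.sqrt n * (R + 1) + Real.sqrt n) ^ 2 + eNorm w ^ 2) / (2 * t))
                * I0 m) := by
            apply mul_le_mul_of_nonneg_left _ (by positivity)
            exact mul_le_mul_of_nonneg_right hexp (hI0nn m)
        _ = A * I0 m := by rw [hA, mul_assoc]
    have hhas := hasFDerivAt_tsum_of_isPreconnected (hI0sum.mul_left A)
      Metric.isOpen_ball (convex_ball (0 : Cn n) R).isPreconnected
      (fun m x _ => ((hk m).2.1 w x).hasFDerivAt)
      hbound hx₀s (hsummable w x₀) hx₀s
    exact hhas.differentiableAt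
  -- anti-holomorphy in w
  have hKanti : ∀ z : Cn n, Differentiable ℂ fun w => (starRingEnd ℂ) (K w z) := by
    intro z
    have hconjsum : ∀ w : Cn n,
        HasSum (fun m => (starRingEnd ℂ) (k m w z)) ((starRingEnd ℂ) (K w z)) := by
      intro w
      exact (hKsum w z).map (starRingEnd ℂ).toAddMonoidHom continuous_conj
    have heq : (fun w : Cn n => (starRingEnd ℂ) (K w z))
        = fun w => ∑' m, (starRingEnd ℂ) (k m w z) :=
      funext fun w => ((hconjsum w).tsum_eq).symm
    rw [heq]
    intro x₀
    set R : ℝ := ‖x₀‖ + 1 with hR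
    set A : ℝ := (Real.pi ^ n)⁻¹ *
      Real.exp (((Real.sqrt n * (R + 1)) ^ 2 + (eNorm z + Real.sqrt n) ^ 2) / (2 * t)) with hA
    have hx₀s : x₀ ∈ Metric.ball (0 : Cn n) R := by
      rw [Metric.mem_ball, dist_zero_right]
      exact lt_add_one _
    have hbound : ∀ (m : ℕ) (x : Cn n), x ∈ Metric.ball (0 : Cn n) R →
        ‖fderiv ℂ (fun w => (starRingEnd ℂ) (k m w z)) x‖ ≤ A * I0 m := by
      intro m x hx
      apply fderiv_norm_le ((hk m).2.2.1 z)
      intro ω hω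
      have hωnorm : ‖ω‖ ≤ R + 1 := by
        have h1 : ‖ω - x‖ ≤ 1 := by
          rw [Metric.mem_closedBall, dist_eq_norm] at hω; exact hω
        have h2 : ‖x‖ < R := by rwa [Metric.mem_ball, dist_zero_right] at hx
        calc ‖ω‖ = ‖x + (ω - x)‖ := by congr 1; abel
          _ ≤ ‖x‖ + ‖ω - x‖ := norm_add_le _ _
          _ ≤ R + 1 := by linarith
      have heω : eNorm ω ≤ Real.sqrt n * (R + 1) := by
        have h1 := eNorm_le_sqrt_mul_norm ω
        have h2 : Real.sqrt n * ‖ω‖ ≤ Real.sqrt n * (R + 1) :=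
          mul_le_mul_of_nonneg_left hωnorm (Real.sqrt_nonneg _)
        linarith
      have hexp : Real.exp (((eNorm z + Real.sqrt n) ^ 2 + eNorm ω ^ 2) / (2 * t))
          ≤ Real.exp (((eNorm z + Real.sqrt n) ^ 2 + (Real.sqrt n * (R + 1)) ^ 2) / (2 * t)) := by
        have h := exp_factor_le ht heω (eNorm_nonneg ω) ((eNorm z + Real.sqrt n) ^ 2)
        calc Real.exp (((eNorm z + Real.sqrt n) ^ 2 + eNorm ω ^ 2) / (2 * t))
            = Real.exp ((eNorm ω ^ 2 + (eNorm z + Real.sqrt n) ^ 2) / (2 * t)) := by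
              congr 1; ring
          _ ≤ Real.exp (((Real.sqrt n * (R + 1)) ^ 2 + (eNorm z + Real.sqrt n) ^ 2) / (2 * t)) :=
              h
          _ = _ := by congr 1; ring
      calc ‖(starRingEnd ℂ) (k m ω z)‖ = ‖k m ω z‖ := RCLike.norm_conj _
        _ ≤ (Real.pi ^ n)⁻¹ *
            (Real.exp (((eNorm z + Real.sqrt n) ^ 2 + eNorm ω ^ 2) / (2 * t)) * I0 m) :=
          hkb' m ω z
        _ ≤ (Real.pi ^ n)⁻¹ *
            (Real.exp (((eNorm z + Real.sqrt n) ^ 2 + (Real.sqrt n * (R + 1)) ^ 2) / (2 * t))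
              * I0 m) := by
            apply mul_le_mul_of_nonneg_left _ (by positivity)
            exact mul_le_mul_of_nonneg_right hexp (hI0nn m)
        _ = A * I0 m := by
            rw [hA, mul_assoc]
            congr 3
            ring
    have hsum0 : Summable fun m => (starRingEnd ℂ) (k m x₀ z) := by
      apply Summable.of_norm
      apply ((hnormsum x₀ z).congr (fun m => (RCLike.norm_conj _).symm))
    have hhas := hasFDerivAt_tsum_of_isPreconnected (hI0sum.mul_left A)
      Metric.isOpen_ball (convex_ball (0 : Cn n) R).isPreconnected
      (fun m x _ => (((hk m).2.2.1 z) x).hasFDerivAt)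
      hbound hx₀s hsum0 hx₀s
    exact hhas.differentiableAt
  -- construction of dominating functions for K
  have build : ∀ ε : ℝ, 0 < ε → ∃ Hf : Cn n → ℝ, Integrable Hf ∧ (∀ x, 0 ≤ Hf x) ∧
      (∀ w z : Cn n, ‖K w z‖
        ≤ Real.exp ((eNorm z ^ 2 + eNorm w ^ 2) / (2 * t)) * Hf (w - z)) ∧
      (∫ x, Hf x) ≤ (∑' m, Sm m) + 2 * ε := by
    intro ε hε
    choose H hHi hHnn hHdom hHlt using fun m => choice m (ε * (1/2) ^ m) (by positivity)
    set I : ℕ → ℝ := fun m => ∫ x, H m x with hIdef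
    have hInn : ∀ m, 0 ≤ I m := fun m => integral_nonneg (hHnn m)
    have hImaj : Summable (fun m => Sm m + ε * (1/2) ^ m) :=
      hSmsum.add (summable_geometric_two.mul_left ε)
    have hIsum : Summable I :=
      Summable.of_nonneg_of_le hInn (fun m => (hHlt m).le) hImaj
    have hIle : ∑' m, I m ≤ (∑' m, Sm m) + 2 * ε := by
      have h1 : ∑' m, I m ≤ ∑' m, (Sm m + ε * (1/2) ^ m) :=
        hIsum.tsum_le_tsum (fun m => (hHlt m).le) hImaj
      have h2 : ∑' m, (Sm m + ε * (1/2) ^ m)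
          = (∑' m, Sm m) + ε * ∑' m, ((1:ℝ)/2) ^ m := by
        rw [hSmsum.tsum_add (summable_geometric_two.mul_left ε), tsum_mul_left]
      rw [h2, tsum_geometric_two] at h1
      linarith
    set F : Cn n → ℝ≥0∞ := fun x => ∑' m, ENNReal.ofReal (H m x) with hF
    have hFaem : ∀ m, AEMeasurable (fun x => ENNReal.ofReal (H m x)) (volume : Measure (Cn n)) :=
      fun m => ENNReal.measurable_ofReal.comp_aemeasurable (hHi m).aemeasurable
    have hFint : ∫⁻ x, F x = ENNReal.ofReal (∑' m, I m) := by
      rw [hF]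
      simp only []
      rw [lintegral_tsum hFaem]
      rw [ENNReal.ofReal_tsum_of_nonneg hInn hIsum]
      congr 1
      funext m
      exact (ofReal_integral_eq_lintegral_ofReal (hHi m)
        (Filter.Eventually.of_forall (hHnn m))).symm
    have hFaemeas : AEMeasurable F (volume : Measure (Cn n)) := AEMeasurable.ennreal_tsum hFaem
    have hae : ∀ᵐ x : Cn n, F x < ⊤ := ae_lt_top' hFaemeas (by rw [hFint]; exact ENNReal.ofReal_ne_top)
    set Φ : Cn n → ℝ := fun x => ∑' m, H m x with hΦ
    have hΦnn : ∀ x, 0 ≤ Φ x := fun x => tsum_nonneg (fun m => hHnn m x)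
    have hΦeq : Φ = fun x => (F x).toReal := by
      funext x
      rw [hΦ, hF]
      simp only []
      rw [ENNReal.tsum_toReal_eq (fun m => ENNReal.ofReal_ne_top)]
      congr 1
      funext m
      rw [ENNReal.toReal_ofReal (hHnn m x)]
    have hgood : ∀ᵐ x : Cn n, Summable fun m => H m x := by
      filter_upwards [hae] with x hx
      have h1 : Summable fun m => (ENNReal.ofReal (H m x)).toReal :=
        ENNReal.summable_toReal hx.ne
      apply h1.congr
      intro m
      exact ENNReal.toReal_ofReal (hHnn m x)
    obtain ⟨B, hBsub, hBmeas, hBnull⟩ :=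
      exists_measurable_superset_of_null (ae_iff.mp hgood)
    set patch : Cn n → ℝ := fun x => (Real.pi ^ n)⁻¹ *
        (Real.exp ((2 * Real.sqrt n * eNorm x + n) / (2 * t)) * ∫ y, Φ y) with hpatch
    have hΦaem : AEMeasurable Φ (volume : Measure (Cn n)) := by
      rw [hΦeq]; exact hFaemeas.ennreal_toReal
    have hΦint : Integrable Φ := by
      refine ⟨hΦaem.aestronglyMeasurable, ?_⟩
      rw [hasFiniteIntegral_iff_norm]
      calc ∫⁻ x, ENNReal.ofReal ‖Φ x‖ = ∫⁻ x, ENNReal.ofReal (Φ x) := by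
            congr 1; funext x; rw [Real.norm_of_nonneg (hΦnn x)]
        _ ≤ ∫⁻ x, F x := by
            apply lintegral_mono
            intro x
            rw [hΦeq]
            exact ENNReal.ofReal_toReal_le
        _ < ⊤ := by rw [hFint]; exact ENNReal.ofReal_lt_top
    have hΦI : ∫ x, Φ x ≤ ∑' m, I m := by
      have h1 : ENNReal.ofReal (∫ x, Φ x) = ∫⁻ x, ENNReal.ofReal (Φ x) :=
        ofReal_integral_eq_lintegral_ofReal hΦint (Filter.Eventually.of_forall hΦnn)
      have h2 : (∫⁻ x, ENNReal.ofReal (Φ x)) ≤ ∫⁻ x, F x := by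
        apply lintegral_mono
        intro x
        rw [hΦeq]
        exact ENNReal.ofReal_toReal_le
      rw [hFint] at h2
      rw [← h1] at h2
      exact (ENNReal.ofReal_le_ofReal_iff (tsum_nonneg hInn)).mp h2
    have hdomK : ∀ w z : Cn n, Summable (fun m => H m (w - z)) →
        ‖K w z‖ ≤ Real.exp ((eNorm z ^ 2 + eNorm w ^ 2) / (2 * t)) * Φ (w - z) := by
      intro w z hs
      have h1 : ‖K w z‖ ≤ ∑' m, ‖k m w z‖ := norm_tsum_le_tsum_norm (hnormsum w z)
      have h2 : ∑' m, ‖k m w z‖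
          ≤ ∑' m, Real.exp ((eNorm z ^ 2 + eNorm w ^ 2) / (2 * t)) * H m (w - z) :=
        (hnormsum w z).tsum_le_tsum (fun m => hHdom m w z) (hs.mul_left _)
      have h3 : (∑' m, Real.exp ((eNorm z ^ 2 + eNorm w ^ 2) / (2 * t)) * H m (w - z))
          = Real.exp ((eNorm z ^ 2 + eNorm w ^ 2) / (2 * t)) * Φ (w - z) := tsum_mul_left
      rw [h3] at h2
      linarith
    have hdomae : ∀ w : Cn n, ∀ᵐ ζ : Cn n, ‖K w ζ‖
        ≤ Real.exp ((eNorm ζ ^ 2 + eNorm w ^ 2) / (2 * t)) * Φ (w - ζ) := by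
      intro w
      have hmp : MeasurePreserving (fun ζ : Cn n => w - ζ) volume volume :=
        ⟨measurable_const.sub measurable_id, Measure.map_sub_left_eq_self volume w⟩
      have hae2 : ∀ᵐ ζ : Cn n, Summable fun m => H m (w - ζ) :=
        hmp.quasiMeasurePreserving.ae hgood
      filter_upwards [hae2] with ζ hζ
      exact hdomK w ζ hζ
    set Hf : Cn n → ℝ := fun x => if x ∈ B then patch x else Φ x with hHfdef
    have hpatchnn : ∀ x, 0 ≤ patch x := by
      intro x
      rw [hpatch]
      apply mul_nonneg (by positivity)
      apply mul_nonneg (Real.exp_pos _).le (integral_nonneg hΦnn)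
    have haeeq : Hf =ᵐ[volume] Φ := by
      have hnm : ∀ᵐ x : Cn n, x ∉ B := by
        rw [ae_iff]
        simpa using hBnull
      filter_upwards [hnm] with x hx
      rw [hHfdef]
      simp [hx]
    refine ⟨Hf, hΦint.congr haeeq.symm, ?_, ?_, ?_⟩
    · intro x
      rw [hHfdef]
      by_cases hx : x ∈ B
      · simp only [hx, if_true]; exact hpatchnn x
      · simp only [hx, if_false]; exact hΦnn x
    · intro w z
      by_cases hx : w - z ∈ B
      · rw [hHfdef]
        simp only [hx, if_true]
        have hwb := weighted_pointwise_bound ht hKhol hΦint hΦnn hdomae w z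
        rw [hpatch]
        calc ‖K w z‖ = (Real.pi ^ n)⁻¹ * (Real.pi ^ n * ‖K w z‖) := by field_simp
          _ ≤ (Real.pi ^ n)⁻¹ * (Real.exp ((eNorm z ^ 2 + eNorm w ^ 2) / (2 * t)) *
              (Real.exp ((2 * Real.sqrt n * eNorm (w - z) + n) / (2 * t)) * ∫ y, Φ y)) :=
            mul_le_mul_of_nonneg_left hwb (by positivity)
          _ = Real.exp ((eNorm z ^ 2 + eNorm w ^ 2) / (2 * t)) * ((Real.pi ^ n)⁻¹ *
              (Real.exp ((2 * Real.sqrt n * eNorm (w - z) + n) / (2 * t)) * ∫ y, Φ y)) := by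
            ring
      · rw [hHfdef]
        simp only [hx, if_false]
        apply hdomK w z
        by_contra hns
        exact hx (hBsub hns)
    · rw [integral_congr_ae haeeq]
      linarith
  -- conclusion
  obtain ⟨Hf1, hHf1i, hHf1nn, hHf1dom, _⟩ := build 1 one_pos
  set SK : Set ℝ := { c : ℝ | ∃ H : Cn n → ℝ, Integrable H ∧ (∀ x, 0 ≤ H x) ∧
      (∀ w z : Cn n, ‖K w z‖
        ≤ Real.exp ((eNorm z ^ 2 + eNorm w ^ 2) / (2 * t)) * H (w - z)) ∧
      c = ∫ x, H x } with hSKdef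
  have hSKbdd : BddBelow SK := by
    refine ⟨0, ?_⟩
    rintro c ⟨H, h1, h2, h3, rfl⟩
    exact integral_nonneg h2
  have hfinal : sInf SK ≤ ∑' m, Sm m := by
    apply le_of_forall_pos_le_add
    intro ε hε
    obtain ⟨Hf, h1, h2, h3, h4⟩ := build (ε / 2) (by positivity)
    have hmem : (∫ x, Hf x) ∈ SK := ⟨Hf, h1, h2, h3, rfl⟩
    calc sInf SK ≤ ∫ x, Hf x := csInf_le hSKbdd hmem
      _ ≤ (∑' m, Sm m) + 2 * (ε / 2) := h4
      _ = (∑' m, Sm m) + ε := by ring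
  refine ⟨K, ⟨hKmeas, hKhol, hKanti, ⟨Hf1, hHf1i, hHf1nn, hHf1dom⟩⟩, hKsum, ?_⟩
  calc wienerNorm n t K = ((Real.pi * t) ^ n)⁻¹ * sInf SK := rfl
    _ ≤ ((Real.pi * t) ^ n)⁻¹ * ∑' m, Sm m :=
        mul_le_mul_of_nonneg_left hfinal (inv_nonneg.mpr hπt.le)
    _ = ∑' m, wienerNorm n t (k m) := by
        rw [← tsum_mul_left]
        exact tsum_congr fun m => (hwnorm m).symm
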